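/- arXiv:2204.02705 — 4 statements merged into one kernel-verified Lean document; each statement's English description precedes it below -/
import Mathlib

section
/- There is no non-trivial partition regular class of points of Cantor space that is an Fσ set. Precisely: let L be a set of points of Cantor space ℕ → Bool (with the product topology) which, under the identification of x : ℕ → Bool with the set {n : x n = true}, is partition regular, i.e., L is nonempty, x ∈ L together with (∀ n, x n = true → y n = true) implies y ∈ L, and whenever x ∈ L and x is pointwise below the pointwise supremum of finitely many points y₀,…,y_k, then some y_i ∈ L. If L is a countable union of closed subsets of ℕ → Bool, then L contains a point x such that {n : x n = true} is finite. -/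
/-- Cylinder lemma: if `x` is not in the closed set `F`, a whole cylinder around `x`
misses `F`. -/
lemma PR_cyl {F : Set (ℕ → Bool)} (hF : IsClosed F) {x : ℕ → Bool} (hx : x ∉ F) :
    ∃ m, ∀ y : ℕ → Bool, (∀ i < m, y i = x i) → y ∉ F := by
  have hopen := hF.isOpen_compl
  rw [isOpen_pi_iff] at hopen
  obtain ⟨I, u, hu, hsub⟩ := hopen x hx
  refine ⟨(I.sup id) + 1, fun y hy hyF => hsub ?_ hyF⟩
  intro i hi
  have : y i = x i := hy i (Nat.lt_succ_of_le (Finset.le_sup (f := id) hi))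
  rw [this]; exact (hu i hi).2

/-- The inductive construction of two block sets.  State: `(s0, s1, M)` where `s0`, `s1`
are the finite approximations to the two sets and `M` is the current boundary.
At step `j`, the set of parity `1 - j % 2` is frozen and, using the chooser `m`
applied to the frozen set, a new boundary `b` is picked; the block `[M, b)` is added to
the set of parity `j % 2`. -/
noncomputable def PRst (m : ℕ → (ℕ → Bool) → ℕ) : ℕ → (ℕ → Bool) × (ℕ → Bool) × ℕ
  | 0 => (fun _ => false, fun _ => false, 0)
  | j+1 =>
    let s0 := (PRst m j).1
    let s1 := (PRst m j).2.1
    let M := (PRst m j).2.2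
    let b := max (m (j/2) (if j % 2 = 0 then s1 else s0)) (M+1)
    if j % 2 = 0 then (fun n => s0 n || (decide (M ≤ n) && decide (n < b)), s1, b)
    else (s0, fun n => s1 n || (decide (M ≤ n) && decide (n < b)), b)

section PRlemmas

variable (m : ℕ → (ℕ → Bool) → ℕ)

lemma PRst_b (j : ℕ) : (PRst m (j+1)).2.2 =
    max (m (j/2) (if j % 2 = 0 then (PRst m j).2.1 else (PRst m j).1))
      ((PRst m j).2.2 + 1) := by
  rw [PRst]
  by_cases h : j % 2 = 0 <;> simp [h]

/-- The frozen set does not change at step `j`. -/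
lemma PRst_freeze (j : ℕ) :
    (if j % 2 = 0 then (PRst m (j+1)).2.1 else (PRst m (j+1)).1) =
    (if j % 2 = 0 then (PRst m j).2.1 else (PRst m j).1) := by
  conv_lhs => rw [PRst]
  by_cases h : j % 2 = 0 <;> simp [h]

lemma PRst_M_lt (j : ℕ) : (PRst m j).2.2 < (PRst m (j+1)).2.2 := by
  rw [PRst_b]; omega

lemma PRst_M_mono : StrictMono fun j => (PRst m j).2.2 :=
  strictMono_nat_of_lt_succ (PRst_M_lt m)

lemma PRst_M_ge (j : ℕ) : j ≤ (PRst m j).2.2 := by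
  induction j with
  | zero => simp [PRst]
  | succ j ih => have := PRst_M_lt m j; omega

/-- Support bound: both approximations are `false` at or beyond the boundary. -/
lemma PRst_supp (j : ℕ) : ∀ n, (PRst m j).2.2 ≤ n →
    (PRst m j).1 n = false ∧ (PRst m j).2.1 n = false := by
  induction j with
  | zero => intro n _; simp [PRst]
  | succ j ih =>
    intro n hn
    have hM : (PRst m j).2.2 < (PRst m (j+1)).2.2 := PRst_M_lt m j
    have hn' : (PRst m j).2.2 ≤ n := by omega
    have hs := ih n hn'
    rw [PRst_b] at hn
    rw [PRst]
    by_cases h : j % 2 = 0 <;> simp [h] at hn ⊢ <;>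
      simp [hs.1, hs.2] <;> omega

/-- Stability: below the boundary, values never change afterwards. -/
lemma PRst_stab (j : ℕ) : ∀ n, n < (PRst m j).2.2 →
    (PRst m (j+1)).1 n = (PRst m j).1 n ∧ (PRst m (j+1)).2.1 n = (PRst m j).2.1 n := by
  intro n hn
  rw [PRst]
  by_cases h : j % 2 = 0 <;> simp [h] <;> omega

lemma PRst_stab' (j j' : ℕ) (hjj : j ≤ j') : ∀ n, n < (PRst m j).2.2 →
    (PRst m j').1 n = (PRst m j).1 n ∧ (PRst m j').2.1 n = (PRst m j).2.1 n := by
  induction j', hjj using Nat.le_induction with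
  | base => exact fun n _ => ⟨rfl, rfl⟩
  | succ j' hj ih =>
    intro n hn
    have hM : (PRst m j).2.2 ≤ (PRst m j').2.2 := (PRst_M_mono m).monotone hj
    have h2 := PRst_stab m j' n (lt_of_lt_of_le hn hM)
    exact ⟨h2.1.trans (ih n hn).1, h2.2.trans (ih n hn).2⟩

/-- Cover: below the boundary, the two approximations cover everything. -/
lemma PRst_cover (j : ℕ) : ∀ n, n < (PRst m j).2.2 →
    (PRst m j).1 n = true ∨ (PRst m j).2.1 n = true := by
  induction j with
  | zero => intro n hn; simp [PRst] at hn
  | succ j ih =>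
    intro n hn
    rw [PRst_b] at hn
    rw [PRst]
    by_cases h : j % 2 = 0 <;> simp [h] at hn ⊢
    · rcases Nat.lt_or_ge n (PRst m j).2.2 with h2 | h2
      · rcases ih n h2 with h3 | h3
        · left; left; exact h3
        · right; exact h3
      · left; right; omega
    · rcases Nat.lt_or_ge n (PRst m j).2.2 with h2 | h2
      · rcases ih n h2 with h3 | h3
        · left; exact h3
        · right; left; exact h3
      · right; right; omega

/-- The limit sets. -/
noncomputable def PRY (m : ℕ → (ℕ → Bool) → ℕ) (p : Bool) (n : ℕ) : Bool :=
  if p then (PRst m (n+1)).2.1 n else (PRst m (n+1)).1 n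

lemma PRY_eq (p : Bool) (j n : ℕ) (hn : n < (PRst m j).2.2) :
    PRY m p n = (if p then (PRst m j).2.1 n else (PRst m j).1 n) := by
  rcases Nat.le_total j (n+1) with h | h
  · have := PRst_stab' m j (n+1) h n hn
    unfold PRY
    cases p <;> simp [this.1, this.2]
  · have hn' : n < (PRst m (n+1)).2.2 := by have := PRst_M_ge m (n+1); omega
    have := PRst_stab' m (n+1) j h n hn'
    unfold PRY
    cases p <;> simp [this.1, this.2]

end PRlemmas

/-- There is no non-trivial Fσ (boldface Σ⁰₂) partition regular class of points of
Cantor space: any partition regular `L ⊆ ℕ → Bool` which is a countable union of closed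
sets contains a point whose corresponding subset of `ℕ` is finite. -/
theorem no_nontrivial_sigma02_partitionRegular (L : Set (ℕ → Bool))
    (hne : L.Nonempty)
    (hup : ∀ x ∈ L, ∀ y : ℕ → Bool, (∀ n, x n = true → y n = true) → y ∈ L)
    (hcover : ∀ x ∈ L, ∀ (k : ℕ) (y : Fin (k + 1) → ℕ → Bool),
      (∀ n, x n = true → ∃ i, y i n = true) → ∃ i, y i ∈ L)
    (F : ℕ → Set (ℕ → Bool)) (hF : ∀ n, IsClosed (F n)) (hLF : L = ⋃ n, F n) :
    ∃ x ∈ L, {n : ℕ | x n = true}.Finite := by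
  by_contra hcon
  push_neg at hcon
  -- every finitely supported point avoids every `F k`
  have hfin : ∀ (k : ℕ) (s : ℕ → Bool), {n : ℕ | s n = true}.Finite → s ∉ F k := by
    intro k s hs hsF
    exact hcon s (hLF ▸ Set.mem_iUnion.mpr ⟨k, hsF⟩) hs
  have hclaim : ∀ (k : ℕ) (s : ℕ → Bool), ∃ m, {n : ℕ | s n = true}.Finite →
      ∀ y : ℕ → Bool, (∀ i < m, y i = s i) → y ∉ F k := by
    intro k s
    by_cases hs : {n : ℕ | s n = true}.Finite
    · obtain ⟨m, hm⟩ := PR_cyl (hF k) (hfin k s hs)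
      exact ⟨m, fun _ => hm⟩
    · exact ⟨0, fun h => absurd h hs⟩
  choose m hm using hclaim
  -- at step `j`, the frozen limit set avoids `F (j / 2)`
  have key : ∀ j : ℕ, PRY m (decide (j % 2 = 0)) ∉ F (j / 2) := by
    intro j
    have hqfin : {n : ℕ |
        (if j % 2 = 0 then (PRst m j).2.1 else (PRst m j).1) n = true}.Finite := by
      apply Set.Finite.subset (Set.finite_Iio ((PRst m j).2.2))
      intro n hn
      simp only [Set.mem_setOf_eq] at hn
      simp only [Set.mem_Iio]
      by_contra hnM
      have hs := PRst_supp m j n (Nat.le_of_not_lt hnM)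
      by_cases h : j % 2 = 0 <;> simp [h] at hn <;> simp_all
    apply hm (j/2) _ hqfin
    intro i hi
    have hi' : i < (PRst m (j+1)).2.2 := by
      rw [PRst_b]
      exact lt_of_lt_of_le hi (le_max_left _ _)
    have h1 := PRY_eq m (decide (j % 2 = 0)) (j+1) i hi'
    rw [h1]
    have h2 := PRst_freeze m j
    simp only [decide_eq_true_eq]
    by_cases h : j % 2 = 0
    · simp only [if_pos h] at h2 ⊢; rw [h2]
    · simp only [if_neg h] at h2 ⊢; rw [h2]
  have key' : ∀ (k : ℕ) (p : Bool), PRY m p ∉ F k := by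
    intro k p
    cases p
    · have h1 : (2*k+1) % 2 = 1 := by omega
      have h2 : (2*k+1) / 2 = k := by omega
      have := key (2*k+1)
      rw [h1, h2] at this
      simpa using this
    · have h1 : (2*k) % 2 = 0 := by omega
      have h2 : (2*k) / 2 = k := by omega
      have := key (2*k)
      rw [h1, h2] at this
      simpa using this
  -- the full set is in `L`
  obtain ⟨z, hz⟩ := hne
  have hone : (fun _ => true) ∈ L := hup z hz _ (fun n _ => rfl)
  -- the two limit sets cover `ℕ`
  obtain ⟨i, hiL⟩ := hcover _ hone 1 ![PRY m false, PRY m true] (by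
    intro n _
    have hn : n < (PRst m (n+1)).2.2 := lt_of_lt_of_le (n.lt_succ_self) (PRst_M_ge m (n+1))
    rcases PRst_cover m (n+1) n hn with h | h
    · exact ⟨0, by simpa [PRY] using h⟩
    · exact ⟨1, by simpa [PRY] using h⟩)
  -- contradiction with `key'`
  have : ∃ k, ![PRY m false, PRY m true] i ∈ F k := by
    rw [hLF] at hiL
    exact Set.mem_iUnion.mp hiL
  obtain ⟨k, hk⟩ := this
  fin_cases i
  · exact key' k false (by simpa using hk)
  · exact key' k true (by simpa using hk)
end

section
/- A class A of subsets of ℕ is partition large if and only if A is upward closed and contains a partition regular subclass. -/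
/-- A class `L` of subsets of `ℕ` is partition regular if it is nonempty, upward closed,
and for every `X ∈ L` and every finite cover `Y₀, …, Y_k` of `X`, some `Y_i ∈ L`. -/
def PartitionRegular (L : Set (Set ℕ)) : Prop :=
  L.Nonempty ∧
  (∀ X Y : Set ℕ, X ∈ L → X ⊆ Y → Y ∈ L) ∧
  (∀ X ∈ L, ∀ (k : ℕ) (Y : Fin (k + 1) → Set ℕ), X ⊆ ⋃ i, Y i → ∃ i, Y i ∈ L)

/-- A class `A` of subsets of `ℕ` is partition large if it is nonempty, upward closed,
and every finite cover of `ℕ` has a part in `A`. -/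
def PartitionLarge (A : Set (Set ℕ)) : Prop :=
  A.Nonempty ∧
  (∀ X Y : Set ℕ, X ∈ A → X ⊆ Y → Y ∈ A) ∧
  (∀ (k : ℕ) (Y : Fin (k + 1) → Set ℕ), (Set.univ : Set ℕ) ⊆ ⋃ i, Y i → ∃ i, Y i ∈ A)

/-- A class is partition large iff it is upward closed and contains a partition regular
subclass. -/
theorem partitionLarge_iff (A : Set (Set ℕ)) :
    PartitionLarge A ↔
      ((∀ X Y : Set ℕ, X ∈ A → X ⊆ Y → Y ∈ A) ∧
        ∃ L : Set (Set ℕ), PartitionRegular L ∧ L ⊆ A) := by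
  constructor
  · rintro ⟨hne, hup, hcov⟩
    refine ⟨hup, {X | ∀ (k : ℕ) (Y : Fin (k + 1) → Set ℕ), X ⊆ ⋃ i, Y i → ∃ i, Y i ∈ A},
      ⟨⟨Set.univ, fun k Y h => hcov k Y h⟩, ?_, ?_⟩, ?_⟩
    · -- upward closed
      intro X Y hX hXY k Z hZ
      exact hX k Z (hXY.trans hZ)
    · -- partition regularity
      intro X hX k Y hXY
      by_contra hno
      push_neg at hno
      -- for each i, a cover of `Y i` with no part in `A`
      have hch : ∀ i : Fin (k + 1), ∃ (m : ℕ) (Z : Fin (m + 1) → Set ℕ),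
          Y i ⊆ ⋃ j, Z j ∧ ∀ j, Z j ∉ A := by
        intro i
        have h := hno i
        simp only [Set.mem_setOf_eq] at h
        push_neg at h
        exact h
      choose m Z hZcov hZnot using hch
      set M : ℕ := Finset.univ.sup m with hM
      have hmM : ∀ i, m i ≤ M := fun i => Finset.le_sup (Finset.mem_univ i)
      -- combined family indexed by a product
      set W : Fin (k + 1) × Fin (M + 1) → Set ℕ :=
        fun p => Z p.1 ⟨min p.2.val (m p.1), by have := min_le_right p.2.val (m p.1); omega⟩
        with hW
      have hcard : (k + 1) * (M + 1) - 1 + 1 = (k + 1) * (M + 1) := by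
        have : 1 ≤ (k + 1) * (M + 1) := Nat.one_le_iff_ne_zero.mpr (by positivity)
        omega
      set W' : Fin ((k + 1) * (M + 1) - 1 + 1) → Set ℕ :=
        fun t => W (finProdFinEquiv.symm (Fin.cast hcard t)) with hW'
      have hXW : X ⊆ ⋃ t, W' t := by
        intro x hx
        obtain ⟨_, ⟨i, rfl⟩, hxi⟩ := hXY hx
        obtain ⟨_, ⟨j, rfl⟩, hxj⟩ := hZcov i hxi
        have hj : j.val ≤ M := le_trans (Nat.lt_succ_iff.mp j.isLt) (hmM i)
        refine Set.mem_iUnion.mpr ⟨Fin.cast hcard.symm (finProdFinEquiv (i, ⟨j.val, by omega⟩)), ?_⟩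
        simp only [hW', Fin.cast_cast, Fin.cast_eq_self]
        rw [Equiv.symm_apply_apply]
        have : (⟨min j.val (m i), by have := min_le_right j.val (m i); omega⟩ :
            Fin (m i + 1)) = j := by
          ext
          simp [Nat.lt_succ_iff.mp j.isLt, min_eq_left]
        simpa [hW, this] using hxj
      obtain ⟨t, ht⟩ := hX _ W' hXW
      exact hZnot _ _ ht
    · -- L ⊆ A
      intro X hX
      obtain ⟨i, hi⟩ := hX 0 (fun _ => X) (Set.subset_iUnion (fun _ => X) 0)
      exact hi
  · rintro ⟨hup, L, ⟨⟨X₀, hX₀⟩, hLup, hLcov⟩, hLA⟩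
    refine ⟨⟨X₀, hLA hX₀⟩, hup, ?_⟩
    intro k Y hY
    obtain ⟨i, hi⟩ := hLcov X₀ hX₀ k Y (fun x _ => hY (Set.mem_univ x))
    exact ⟨i, hLA hi⟩
end

section
/- Let A ⊆ U₂ be a partition large class of subsets of ℕ, where U₂ = {X ⊆ ℕ : X has at least two distinct elements}. Then L(A) = {X ⊆ ℕ : A ∩ L_X is partition large}, where L(A) = {X ⊆ ℕ : for every finite cover X₀,…,X_k of X there is some i with X_i ∈ A} is the largest partition regular subclass of A, and L_X = {Y ⊆ ℕ : Y ∩ X is infinite}. -/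
/-- `LargestPR A` is the largest partition regular subclass of `A` (when nonempty):
the sets all of whose finite covers have a part in `A`. -/
def LargestPR (A : Set (Set ℕ)) : Set (Set ℕ) :=
  {X : Set ℕ | ∀ (k : ℕ) (Y : Fin (k + 1) → Set ℕ), X ⊆ ⋃ i, Y i → ∃ i, Y i ∈ A}

/-- For a partition large class `A ⊆ U₂`, the largest partition regular subclass of `A`
is exactly the class of `X` such that `A ∩ L_X` is partition large. -/
theorem largestPR_eq_large_inter_LX (A : Set (Set ℕ)) (hA : PartitionLarge A)
    (hsub : A ⊆ {X : Set ℕ | ∃ a ∈ X, ∃ b ∈ X, a ≠ b}) :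
    LargestPR A = {X : Set ℕ | PartitionLarge (A ∩ {Y : Set ℕ | (Y ∩ X).Infinite})} := by
  classical
  obtain ⟨hne, hup, hlarge⟩ := hA
  have hsingle : ∀ n : ℕ, ({n} : Set ℕ) ∉ A := by
    intro n hn
    obtain ⟨a, ha, b, hb, hab⟩ := hsub hn
    simp only [Set.mem_singleton_iff] at ha hb
    exact hab (ha.trans hb.symm)
  have hempty : (∅ : Set ℕ) ∉ A := by
    intro hn
    obtain ⟨a, ha, -⟩ := hsub hn
    exact ha
  ext X
  simp only [LargestPR, Set.mem_setOf_eq]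
  constructor
  · intro hX
    -- X is infinite
    have hXinf : X.Infinite := by
      by_contra hfin
      rw [Set.not_infinite] at hfin
      obtain ⟨b, hb⟩ := hfin.bddAbove
      obtain ⟨i, hi⟩ := hX b (fun i : Fin (b + 1) => {(i : ℕ)}) (by
        intro x hx
        exact Set.mem_iUnion.2 ⟨⟨x, Nat.lt_succ_of_le (hb hx)⟩, rfl⟩)
      exact hsingle _ hi
    refine ⟨⟨Set.univ, ?_, ?_⟩, ?_, ?_⟩
    · obtain ⟨W, hW⟩ := hne
      exact hup W Set.univ hW (Set.subset_univ _)
    · simpa [Set.univ_inter] using hXinf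
    · rintro Y Z ⟨hYA, hYX⟩ hYZ
      exact ⟨hup Y Z hYA hYZ,
        Set.Infinite.mono (Set.inter_subset_inter_left _ hYZ) hYX⟩
    · intro k Y hcov
      by_contra hcon
      push_neg at hcon
      -- the finite leftover
      set F : Set ℕ := ⋃ i : Fin (k + 1),
        (if (Y i ∩ X).Infinite then (∅ : Set ℕ) else Y i ∩ X) with hF
      have hFfin : F.Finite := by
        apply Set.finite_iUnion
        intro i
        by_cases h : (Y i ∩ X).Infinite
        · simp [h]
        · simp [h, Set.not_infinite.mp h]
      obtain ⟨b, hb⟩ := hFfin.bddAbove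
      set N := b + 1 with hN
      set Z : ℕ → Set ℕ := fun n =>
        if h : n < k + 1 then
          (if (Y ⟨n, h⟩ ∩ X).Infinite then Y ⟨n, h⟩ ∩ X else ∅)
        else {n - (k + 1)} with hZ
      obtain ⟨j, hj⟩ := hX (k + N) (fun i : Fin (k + N + 1) => Z i) (by
        intro x hx
        have hxU : x ∈ ⋃ i, Y i := hcov (Set.mem_univ x)
        obtain ⟨i, hxi⟩ := Set.mem_iUnion.mp hxU
        by_cases hinf : (Y i ∩ X).Infinite
        · refine Set.mem_iUnion.2 ⟨⟨(i : ℕ), by omega⟩, ?_⟩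
          simp only [Z, dif_pos i.isLt, Fin.eta, if_pos hinf]
          exact ⟨hxi, hx⟩
        · have hxF : x ∈ F := Set.mem_iUnion.2 ⟨i, by simp [hinf]; exact ⟨hxi, hx⟩⟩
          have hxN : x < N := Nat.lt_succ_of_le (hb hxF)
          refine Set.mem_iUnion.2 ⟨⟨k + 1 + x, by omega⟩, ?_⟩
          have : ¬ (k + 1 + x < k + 1) := by omega
          simp only [Z, dif_neg this]
          simp only [Set.mem_singleton_iff]
          omega)
      by_cases hjk : (j : ℕ) < k + 1
      · rw [hZ] at hj
        simp only [dif_pos hjk] at hj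
        by_cases hinf : (Y ⟨(j : ℕ), hjk⟩ ∩ X).Infinite
        · rw [if_pos hinf] at hj
          exact hcon ⟨(j : ℕ), hjk⟩
            ⟨hup _ _ hj Set.inter_subset_left, hinf⟩
        · rw [if_neg hinf] at hj
          exact hempty hj
      · rw [hZ] at hj
        simp only [dif_neg hjk] at hj
        exact hsingle _ hj
  · rintro ⟨-, -, hlargeX⟩ k Y hcov
    set Z : ℕ → Set ℕ := fun n =>
      if h : n < k + 1 then Y ⟨n, h⟩ else Xᶜ with hZ
    obtain ⟨j, hj⟩ := hlargeX (k + 1) (fun i : Fin (k + 1 + 1) => Z i) (by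
      intro x _
      by_cases hx : x ∈ X
      · obtain ⟨i, hxi⟩ := Set.mem_iUnion.mp (hcov hx)
        refine Set.mem_iUnion.2 ⟨⟨(i : ℕ), by omega⟩, ?_⟩
        simp only [Z, dif_pos i.isLt, Fin.eta]
        exact hxi
      · refine Set.mem_iUnion.2 ⟨⟨k + 1, by omega⟩, ?_⟩
        have : ¬ (k + 1 < k + 1) := by omega
        simp only [Z, dif_neg this]
        exact hx)
    obtain ⟨hjA, hjX⟩ := hj
    by_cases hjk : (j : ℕ) < k + 1
    · rw [hZ] at hjA
      simp only [dif_pos hjk] at hjA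
      exact ⟨⟨(j : ℕ), hjk⟩, hjA⟩
    · exfalso
      rw [hZ] at hjX
      simp only [dif_neg hjk] at hjX
      simp only [Set.mem_setOf_eq, Set.compl_inter_self] at hjX
      exact Set.not_infinite.mpr (Set.finite_empty) hjX
end

section
/- A class A of pairs of subsets of ℕ is 𝔥-large if and only if A is upward closed in both coordinates and contains an 𝔥-regular subclass. -/
/-- A class `L` of pairs of subsets of `ℕ` is 𝔥-regular if it is nonempty, upward closed
in both coordinates, and for every `(X, Y) ∈ L`, every finite cover `Z₀, …, Z_k` of `X`
and every `m`, there is `j` with `(Z_j, Y ∖ {0, …, m−1}) ∈ L`. -/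
def HRegular (L : Set (Set ℕ × Set ℕ)) : Prop :=
  L.Nonempty ∧
  (∀ p ∈ L, ∀ X' Y' : Set ℕ, p.1 ⊆ X' → p.2 ⊆ Y' → (X', Y') ∈ L) ∧
  (∀ p ∈ L, ∀ (k : ℕ) (Z : Fin (k + 1) → Set ℕ), p.1 ⊆ ⋃ j, Z j →
    ∀ m : ℕ, ∃ j, (Z j, p.2 \ Set.Iio m) ∈ L)

/-- A class `A` of pairs of subsets of `ℕ` is 𝔥-large if it is upward closed in both
coordinates and, for every cofinite `Y`, the slice `{X : (X, Y) ∈ A}` is partition large. -/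
def HLarge (A : Set (Set ℕ × Set ℕ)) : Prop :=
  (∀ p ∈ A, ∀ X' Y' : Set ℕ, p.1 ⊆ X' → p.2 ⊆ Y' → (X', Y') ∈ A) ∧
  (∀ Y : Set ℕ, Yᶜ.Finite → PartitionLarge {X : Set ℕ | (X, Y) ∈ A})

/-- `X` is large relative to the class `A`: every finite cover of `X` has a part in `A`. -/
def Lge (A : Set (Set ℕ)) (X : Set ℕ) : Prop :=
  ∀ (k : ℕ) (Z : Fin (k + 1) → Set ℕ), X ⊆ ⋃ j, Z j → ∃ j, Z j ∈ A

lemma lge_finset {A : Set (Set ℕ)} {X : Set ℕ} (h : Lge A X)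
    {S : Finset (Set ℕ)} (hS : S.Nonempty) (hX : X ⊆ ⋃₀ S) : ∃ Z ∈ S, Z ∈ A := by
  have hc : S.card - 1 + 1 = S.card := Nat.succ_pred_eq_of_pos (Finset.card_pos.mpr hS)
  set Z : Fin (S.card - 1 + 1) → Set ℕ := fun i => (S.equivFin.symm (Fin.cast hc i) : Set ℕ)
    with hZ
  have hcov : X ⊆ ⋃ j, Z j := by
    intro x hx
    obtain ⟨W, hW, hxW⟩ := hX hx
    refine Set.mem_iUnion.mpr ⟨Fin.cast hc.symm (S.equivFin ⟨W, hW⟩), ?_⟩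
    simpa [hZ] using hxW
  obtain ⟨j, hj⟩ := h _ Z hcov
  exact ⟨Z j, (S.equivFin.symm (Fin.cast hc j)).2, hj⟩

/-- The canonical 𝔥-regular subclass of an 𝔥-large class. -/
def regCore (A : Set (Set ℕ × Set ℕ)) : Set (Set ℕ × Set ℕ) :=
  {p | p.2ᶜ.Finite ∧ ∀ Y' : Set ℕ, Y'ᶜ.Finite → Y' ⊆ p.2 → Lge {Z | (Z, Y') ∈ A} p.1}

/-- A class of pairs is 𝔥-large iff it is upward closed in both coordinates and contains
an 𝔥-regular subclass. -/
theorem hLarge_iff (A : Set (Set ℕ × Set ℕ)) :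
    HLarge A ↔
      ((∀ p ∈ A, ∀ X' Y' : Set ℕ, p.1 ⊆ X' → p.2 ⊆ Y' → (X', Y') ∈ A) ∧
        ∃ L : Set (Set ℕ × Set ℕ), HRegular L ∧ L ⊆ A) := by
  constructor
  · rintro ⟨hup, hlarge⟩
    refine ⟨hup, regCore A, ⟨?_, ?_, ?_⟩, ?_⟩
    · -- nonempty: (univ, univ)
      refine ⟨(Set.univ, Set.univ), by simp, fun Y' hY' _ => ?_⟩
      exact fun k Z hZ => (hlarge Y' hY').2.2 k Z hZ
    · -- upward closed
      rintro ⟨X, Y⟩ ⟨hYfin, hP⟩ X' Y' hX hY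
      refine ⟨Set.Finite.subset hYfin (Set.compl_subset_compl.mpr hY), ?_⟩
      intro Y'' hY'' hY''sub k Z hZ
      have hsub : Y'' ∩ Y ⊆ Y := Set.inter_subset_right
      have hfin : (Y'' ∩ Y)ᶜ.Finite := by
        rw [Set.compl_inter]; exact hY''.union hYfin
      obtain ⟨j, hj⟩ := hP (Y'' ∩ Y) hfin hsub k Z (hX.trans hZ)
      exact ⟨j, hup _ hj _ Y'' (subset_refl _) Set.inter_subset_left⟩
    · -- regularity
      rintro ⟨X, Y⟩ ⟨hYfin, hP⟩ k Z hZ m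
      by_contra hcon
      push_neg at hcon
      have hYmfin : (Y \ Set.Iio m)ᶜ.Finite := by
        rw [Set.diff_eq, Set.compl_inter, compl_compl]
        exact hYfin.union (Set.finite_Iio m)
      -- for each j, extract a failing cofinite Y_j and cover of Z j
      have hfail : ∀ j : Fin (k + 1), ∃ Y' : Set ℕ, Y'ᶜ.Finite ∧ Y' ⊆ Y \ Set.Iio m ∧
          ∃ (n : ℕ) (W : Fin (n + 1) → Set ℕ), Z j ⊆ ⋃ i, W i ∧ ∀ i, (W i, Y') ∉ A := by
        intro j
        have := hcon j
        simp only [regCore, Set.mem_setOf_eq, not_and] at this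
        have h2 := this hYmfin
        push_neg at h2
        obtain ⟨Y', hY'fin, hY'sub, hnl⟩ := h2
        simp only [Lge, not_forall] at hnl
        obtain ⟨n, W, hcov, hno⟩ := hnl
        push_neg at hno
        exact ⟨Y', hY'fin, hY'sub, n, W, hcov, fun i => hno i⟩
      choose Yf hYffin hYfsub n W hWcov hWno using hfail
      set Y'' : Set ℕ := ⋂ j, Yf j with hY''
      have hY''fin : Y''ᶜ.Finite := by
        rw [hY'', Set.compl_iInter]
        exact Set.finite_iUnion hYffin
      have hY''sub : Y'' ⊆ Y := fun x hx =>
        ((hYfsub 0) (Set.mem_iInter.mp hx 0)).1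
      -- combined cover as a finset
      classical
      set T : Finset (Set ℕ) :=
        Finset.univ.biUnion (fun j : Fin (k + 1) => Finset.image (W j) Finset.univ) with hT
      have hTne : T.Nonempty := by
        refine ⟨W 0 0, ?_⟩
        simp only [hT, Finset.mem_biUnion, Finset.mem_image, Finset.mem_univ, true_and]
        exact ⟨0, 0, rfl⟩
      have hXT : X ⊆ ⋃₀ (T : Finset (Set ℕ)) := by
        intro x hx
        obtain ⟨j, hj⟩ := Set.mem_iUnion.mp (hZ hx)
        obtain ⟨i, hi⟩ := Set.mem_iUnion.mp (hWcov j hj)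
        have hmem : W j i ∈ T := by
          simp only [hT, Finset.mem_biUnion, Finset.mem_image, Finset.mem_univ, true_and]
          exact ⟨j, i, rfl⟩
        exact ⟨W j i, hmem, hi⟩
      obtain ⟨V, hVT, hVA⟩ := lge_finset (hP Y'' hY''fin hY''sub) hTne hXT
      simp only [hT, Finset.mem_biUnion, Finset.mem_image, Finset.mem_univ, true_and] at hVT
      obtain ⟨j, i, rfl⟩ := hVT
      exact hWno j i (hup _ hVA _ (Yf j) (subset_refl _)
        (fun x hx => Set.mem_iInter.mp hx j))
    · -- regCore ⊆ A
      rintro ⟨X, Y⟩ ⟨hYfin, hP⟩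
      obtain ⟨j, hj⟩ := hP Y hYfin (subset_refl Y) 0 (fun _ => X)
        (by intro x hx; exact Set.mem_iUnion.mpr ⟨0, hx⟩)
      exact hj
  · rintro ⟨hup, L, ⟨⟨p₀, hp₀⟩, hLup, hLreg⟩, hLA⟩
    refine ⟨hup, fun Y hY => ?_⟩
    have huniv : (Set.univ, Set.univ) ∈ L :=
      hLup p₀ hp₀ _ _ (Set.subset_univ _) (Set.subset_univ _)
    obtain ⟨b, hb⟩ := hY.bddAbove
    have hYm : Set.univ \ Set.Iio (b + 1) ⊆ Y := by
      intro x hx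
      by_contra hxY
      exact hx.2 (Nat.lt_succ_of_le (hb hxY))
    have key : ∀ (k : ℕ) (Z : Fin (k + 1) → Set ℕ), (Set.univ : Set ℕ) ⊆ ⋃ i, Z i →
        ∃ i, (Z i, Y) ∈ A := by
      intro k Z hZ
      obtain ⟨j, hj⟩ := hLreg _ huniv k Z hZ (b + 1)
      exact ⟨j, hLA (hLup _ hj _ _ (subset_refl _) hYm)⟩
    refine ⟨⟨Set.univ, ?_⟩, fun X X' hX hXX' => hup _ hX _ _ hXX' (subset_refl _), key⟩
    obtain ⟨i, hi⟩ := key 0 (fun _ => Set.univ) (fun x _ => Set.mem_iUnion.mpr ⟨0, trivial⟩)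
    exact hi
end
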